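/- Let R be a commutative Noetherian ring of prime characteristic p whose Frobenius endomorphism is finite and flat, and let q = p^e with e ≥ 1. Suppose that R is free as a module over itself with scalars acting through the e-th iterate of Frobenius (equivalently, R is free over its subring R^q of q-th powers), with basis e_1, …, e_N. Let h_1, …, h_s be generators of an ideal b of R, and write h_i = Σ_{j=1}^N a_{i,j}^q e_j with a_{i,j} ∈ R for each i. Then b^{[1/q]} is the ideal generated by all the elements a_{i,j} for 1 ≤ i ≤ s and 1 ≤ j ≤ N. -/

import Mathlib

open Ideal

/-- The `q`-th bracket power `J^{[q]}` of an ideal: the ideal generated by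
the `q`-th powers of the elements of `J`. -/
def bracketPow {R : Type*} [CommRing R] (J : Ideal R) (q : ℕ) : Ideal R :=
  Ideal.span ((fun x => x ^ q) '' (J : Set R))

/-- The ideal `b^{[1/q]}`: the smallest ideal `J` with `b ⊆ J^{[q]}`
(realized as the intersection of all such ideals). -/
def frobRoot {R : Type*} [CommRing R] (b : Ideal R) (q : ℕ) : Ideal R :=
  sInf {J : Ideal R | b ≤ bracketPow J q}

/-- The generalized test ideal `τ(a^c) = ⋃_{e ≥ 1} (a^{⌈c p^e⌉})^{[1/p^e]}`. -/
noncomputable def testIdeal {R : Type*} [CommRing R] (p : ℕ) (a : Ideal R) (c : ℝ) : Ideal R :=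
  ⨆ e : ℕ, frobRoot (a ^ ⌈c * (p : ℝ) ^ (e + 1)⌉₊) (p ^ (e + 1))

/-- `ν_a^J(q)`: the largest nonnegative integer `r` with `a^r ⊄ J^{[q]}`
(and `0` if there is no such `r`). -/
noncomputable def nuF {R : Type*} [CommRing R] (a J : Ideal R) (q : ℕ) : ℕ :=
  sSup {r : ℕ | ¬ a ^ r ≤ bracketPow J q}

/-- The F-threshold `c^J(a) = sup_{e ≥ 1} ν_a^J(p^e)/p^e`. -/
noncomputable def FThreshold {R : Type*} [CommRing R] (p : ℕ) (a J : Ideal R) : ℝ :=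
  ⨆ e : ℕ, (nuF a J (p ^ (e + 1)) : ℝ) / (p : ℝ) ^ (e + 1)

/-- `α > 0` is an F-jumping exponent of `a` if `τ(a^α) ≠ τ(a^c)` for all `0 ≤ c < α`. -/
def IsFJumpingExponent {R : Type*} [CommRing R] (p : ℕ) (a : Ideal R) (α : ℝ) : Prop :=
  0 < α ∧ ∀ c : ℝ, 0 ≤ c → c < α → testIdeal p a c ≠ testIdeal p a α


/-- Type synonym for `R` viewed as an `R`-module via Frobenius. -/
def FrobCopy (R : Type*) : Type _ := R

instance {R : Type*} [CommRing R] : CommRing (FrobCopy R) := inferInstanceAs (CommRing R)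

/-- Identity map out of the synonym. -/
def FrobCopy.un {R : Type*} (m : FrobCopy R) : R := m

theorem pow_p_eq_zero_of_flat {R : Type u} [CommRing R] (p : ℕ) [Fact p.Prime] [CharP R p]
    (hflat : (frobenius R p).Flat) {x : R} (hx : x ^ p = 0) : x = 0 := by
  letI alg : Algebra R (FrobCopy R) := (show R →+* FrobCopy R from frobenius R p).toAlgebra
  haveI hfl : Module.Flat R (FrobCopy R) := hflat
  have hsmul : ∀ (a : R) (m : FrobCopy R), FrobCopy.un (a • m) = a ^ p * FrobCopy.un m :=
    fun a m => rfl
  have h0 : (x • (1 : FrobCopy R)) = 0 := by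
    have : FrobCopy.un (x • (1 : FrobCopy R)) = FrobCopy.un 0 := by
      rw [hsmul, hx, zero_mul]; rfl
    exact this
  have hrel : ∑ _i : ULift.{u} (Fin 1), x • (1 : FrobCopy R) = 0 := by
    rw [Fintype.sum_unique, h0]
  obtain ⟨κ, a, y, h1, h2⟩ := Module.Flat.isTrivialRelation_of_sum_smul_eq_zero
    (R := R) (M := FrobCopy R) (f := fun _ : ULift.{u} (Fin 1) => x)
    (x := fun _ => (1 : FrobCopy R)) hrel
  have h1' : (1 : R) = ∑ j, (a ⟨0⟩ j) ^ p * FrobCopy.un (y j) := by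
    have := congrArg FrobCopy.un (h1 ⟨0⟩)
    rw [show FrobCopy.un (∑ j, a ⟨0⟩ j • y j) = ∑ j, FrobCopy.un (a ⟨0⟩ j • y j) from rfl] at this
    simp only [hsmul] at this; exact this
  have h2' : ∀ j, x * a ⟨0⟩ j = 0 := by
    intro j
    have := h2 j
    simp [Fintype.sum_unique] at this; exact this
  have hp1 : p = (p - 1) + 1 := (Nat.succ_pred_eq_of_pos (Fact.out : p.Prime).pos).symm
  calc x = x * 1 := (mul_one x).symm
    _ = ∑ j, x * ((a ⟨0⟩ j) ^ p * FrobCopy.un (y j)) := by rw [← Finset.mul_sum, ← h1']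
    _ = 0 := by
      refine Finset.sum_eq_zero fun j _ => ?_
      rw [hp1]
      calc x * (a ⟨0⟩ j ^ (p - 1 + 1) * FrobCopy.un (y j))
          = (a ⟨0⟩ j ^ (p - 1) * FrobCopy.un (y j)) * (x * a ⟨0⟩ j) := by ring
        _ = 0 := by rw [h2' j, mul_zero]

theorem pow_q_eq_zero_of_flat {R : Type u} [CommRing R] (p : ℕ) [Fact p.Prime] [CharP R p]
    (hflat : (frobenius R p).Flat) (e : ℕ) {x : R} (hx : x ^ p ^ e = 0) : x = 0 := by
  induction e with
  | zero => simpa using hx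
  | succ n ih =>
    rw [pow_succ, pow_mul] at hx
    exact ih (pow_p_eq_zero_of_flat p hflat hx)

/-- description of `b^{[1/q]}` via a basis of `R` over `R^q`. -/
theorem stmt2_frobRoot_eq_span_of_basis
    {R : Type*} [CommRing R] [IsNoetherianRing R] (p : ℕ) [Fact p.Prime] [CharP R p]
    (hfin : (frobenius R p).Finite) (hflat : (frobenius R p).Flat)
    (e : ℕ) (he : 1 ≤ e) (q : ℕ) (hq : q = p ^ e)
    (N : ℕ) (E : Fin N → R)
    (hspan : ∀ x : R, ∃ a : Fin N → R, x = ∑ j, a j ^ q * E j)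
    (hindep : ∀ a : Fin N → R, ∑ j, a j ^ q * E j = 0 → ∀ j, a j ^ q = 0)
    (s : ℕ) (b : Ideal R) (h : Fin s → R) (hgen : b = Ideal.span (Set.range h))
    (A : Fin s → Fin N → R) (hA : ∀ i, h i = ∑ j, A i j ^ q * E j) :
    frobRoot b q = Ideal.span (Set.range fun ij : Fin s × Fin N => A ij.1 ij.2) := by
  subst hq
  have hq0 : p ^ e ≠ 0 := pow_ne_zero _ (Fact.out : p.Prime).pos.ne'
  have hadd : ∀ x y : R, (x + y) ^ p ^ e = x ^ p ^ e + y ^ p ^ e := fun x y =>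
    add_pow_char_pow x y p e
  have hsub : ∀ x y : R, (x - y) ^ p ^ e = x ^ p ^ e - y ^ p ^ e := fun x y =>
    sub_pow_char_pow x y e
  set I := Ideal.span (Set.range fun ij : Fin s × Fin N => A ij.1 ij.2) with hI
  -- representation of elements of `g^q * y` products
  have Pmul : ∀ (J : Ideal R) (g : R), g ∈ J → ∀ y : R, ∃ c : Fin N → R,
      (∀ j, c j ∈ J) ∧ g ^ p ^ e * y = ∑ j, c j ^ p ^ e * E j := by
    intro J g hg y
    obtain ⟨c, hc⟩ := hspan y
    refine ⟨fun j => g * c j, fun j => J.mul_mem_right _ hg, ?_⟩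
    rw [hc, Finset.mul_sum]
    exact Finset.sum_congr rfl fun j _ => by rw [mul_pow]; ring
  -- every element of `bracketPow J q` is `∑ c j ^ q * E j` with `c j ∈ J`
  have key : ∀ (J : Ideal R) (x : R), x ∈ bracketPow J (p ^ e) → ∃ c : Fin N → R,
      (∀ j, c j ∈ J) ∧ x = ∑ j, c j ^ p ^ e * E j := by
    intro J x hx
    have Padd : ∀ x y : R,
        (∃ c : Fin N → R, (∀ j, c j ∈ J) ∧ x = ∑ j, c j ^ p ^ e * E j) →
        (∃ c : Fin N → R, (∀ j, c j ∈ J) ∧ y = ∑ j, c j ^ p ^ e * E j) →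
        (∃ c : Fin N → R, (∀ j, c j ∈ J) ∧ x + y = ∑ j, c j ^ p ^ e * E j) := by
      rintro x y ⟨c, hcJ, rfl⟩ ⟨d, hdJ, rfl⟩
      refine ⟨c + d, fun j => J.add_mem (hcJ j) (hdJ j), ?_⟩
      rw [← Finset.sum_add_distrib]
      exact Finset.sum_congr rfl fun j _ => by rw [Pi.add_apply, hadd, add_mul]
    have Pzero : ∃ c : Fin N → R, (∀ j, c j ∈ J) ∧ (0 : R) = ∑ j, c j ^ p ^ e * E j :=
      ⟨0, fun j => J.zero_mem, by simp [zero_pow hq0]⟩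
    refine Submodule.span_induction ?_ Pzero (fun x y _ _ => Padd x y) ?_ hx
    · rintro _ ⟨g, hg, rfl⟩
      simpa using Pmul J g hg 1
    · rintro r x _ ⟨c, hcJ, rfl⟩
      rw [smul_eq_mul, Finset.mul_sum]
      refine Finset.sum_induction _
        (fun z => ∃ c : Fin N → R, (∀ j, c j ∈ J) ∧ z = ∑ j, c j ^ p ^ e * E j)
        (fun a b => Padd a b) Pzero (fun j _ => ?_)
      have : r * (c j ^ p ^ e * E j) = c j ^ p ^ e * (r * E j) := by ring
      rw [this]
      exact Pmul J (c j) (hcJ j) (r * E j)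
  refine le_antisymm ?_ ?_
  · -- frobRoot b q ≤ I
    refine sInf_le ?_
    show b ≤ bracketPow I (p ^ e)
    rw [hgen, Ideal.span_le]
    rintro _ ⟨i, rfl⟩
    show h i ∈ bracketPow I (p ^ e)
    rw [hA i]
    refine Ideal.sum_mem _ fun j _ => Ideal.mul_mem_right _ _ ?_
    exact Ideal.subset_span ⟨A i j, Ideal.subset_span ⟨(i, j), rfl⟩, rfl⟩
  · refine le_sInf fun J hJ => ?_
    rw [hI, Ideal.span_le]
    rintro _ ⟨⟨i, j⟩, rfl⟩
    show A i j ∈ J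
    have hhi : h i ∈ bracketPow J (p ^ e) := hJ (by rw [hgen]; exact Ideal.subset_span ⟨i, rfl⟩)
    obtain ⟨c, hcJ, hrep⟩ := key J (h i) hhi
    have hz : ∑ j', (A i j' - c j') ^ p ^ e * E j' = 0 := by
      have hAc : ∑ j', A i j' ^ p ^ e * E j' = ∑ j', c j' ^ p ^ e * E j' :=
        (hA i).symm.trans hrep
      calc ∑ j', (A i j' - c j') ^ p ^ e * E j'
          = ∑ j', (A i j' ^ p ^ e * E j' - c j' ^ p ^ e * E j') := by
            exact Finset.sum_congr rfl fun j' _ => by rw [hsub, sub_mul]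
        _ = ∑ j', A i j' ^ p ^ e * E j' - ∑ j', c j' ^ p ^ e * E j' :=
            Finset.sum_sub_distrib _ _
        _ = 0 := by rw [hAc, sub_self]
    have hzj : (A i j - c j) ^ p ^ e = 0 := hindep _ hz j
    have : A i j - c j = 0 := pow_q_eq_zero_of_flat p hflat e hzj
    rw [sub_eq_zero] at this
    rw [this]
    exact hcJ j
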